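/- For the 2-cycles conjugacy class C of S_n (n > 2), the Killing form matrix K(a,b) = |Z(ab) ∩ C| is positive definite; its eigenvalue on the trivial component is (n⁴ − 10n³ + 41n² − 72n + 48)/4, on the standard representation component is n² − 6n + 12, and (for n > 3) on the S^{(n-2,2)} component is 2n. -/

import Mathlib

open Equiv Finset Equiv.Perm Matrix

instance (n : ℕ) : DecidablePred fun σ : Equiv.Perm (Fin n) => σ.IsSwap := fun σ =>
  decidable_of_iff (∃ x y, x ≠ y ∧ σ = Equiv.swap x y) Iff.rfl

variable {n : ℕ}

lemma pair_eq_pair {α : Type*} [DecidableEq α] {u v x y : α} (huv : u ≠ v)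
    (h : ({u, v} : Finset α) = {x, y}) : (u = x ∧ v = y) ∨ (u = y ∧ v = x) := by
  have hu : u ∈ ({x, y} : Finset α) := h ▸ by simp
  have hv : v ∈ ({x, y} : Finset α) := h ▸ by simp
  simp only [Finset.mem_insert, Finset.mem_singleton] at hu hv
  rcases hu with rfl | rfl <;> rcases hv with rfl | rfl <;> tauto

lemma swap_of_mem_support {h : Equiv.Perm (Fin n)} (hs : h.IsSwap) {i : Fin n}
    (hi : i ∈ h.support) : h = Equiv.swap i (h i) := by
  obtain ⟨x, y, hxy, rfl⟩ := hs
  rw [Equiv.Perm.support_swap hxy, Finset.mem_insert, Finset.mem_singleton] at hi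
  rcases hi with rfl | rfl
  · rw [Equiv.swap_apply_left]
  · rw [Equiv.swap_apply_right, Equiv.swap_comm]

lemma swap_support_inj {h₁ h₂ : Equiv.Perm (Fin n)} (h1 : h₁.IsSwap) (h2 : h₂.IsSwap)
    (h : h₁.support = h₂.support) : h₁ = h₂ := by
  obtain ⟨x, y, hxy, rfl⟩ := h1
  obtain ⟨u, v, huv, rfl⟩ := h2
  rw [Equiv.Perm.support_swap hxy, Equiv.Perm.support_swap huv] at h
  rcases pair_eq_pair hxy h with ⟨rfl, rfl⟩ | ⟨rfl, rfl⟩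
  · rfl
  · exact Equiv.swap_comm _ _

lemma swap_comm_iff {x y : Fin n} (hxy : x ≠ y) (g : Equiv.Perm (Fin n)) :
    Equiv.swap x y * g = g * Equiv.swap x y ↔
      (g x = x ∧ g y = y) ∨ (g x = y ∧ g y = x) := by
  constructor
  · intro h
    have key : Equiv.swap (g x) (g y) = Equiv.swap x y := by
      rw [Equiv.swap_apply_apply, ← h, mul_inv_cancel_right]
    have hgxy : g x ≠ g y := fun hc => hxy (g.injective hc)
    have hsupp : ({g x, g y} : Finset (Fin n)) = {x, y} := by
      rw [← Equiv.Perm.support_swap hgxy, ← Equiv.Perm.support_swap hxy, key]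
    exact pair_eq_pair hgxy hsupp
  · intro h
    have key : Equiv.swap (g x) (g y) = Equiv.swap x y := by
      rcases h with ⟨h1, h2⟩ | ⟨h1, h2⟩
      · rw [h1, h2]
      · rw [h1, h2, Equiv.swap_comm]
    have := Equiv.swap_apply_apply g x y
    rw [key] at this
    calc Equiv.swap x y * g = g * Equiv.swap x y * g⁻¹ * g := by rw [← this]
      _ = g * Equiv.swap x y := by rw [inv_mul_cancel_right]

lemma card_swaps_support_subset (s : Finset (Fin n)) :
    (Finset.univ.filter fun h : Equiv.Perm (Fin n) => h.IsSwap ∧ h.support ⊆ s).card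
      = s.card.choose 2 := by
  rw [← Finset.card_powersetCard]
  apply Finset.card_bij (fun h _ => Equiv.Perm.support h)
  · intro h hh
    rw [Finset.mem_filter] at hh
    exact Finset.mem_powersetCard.2 ⟨hh.2.2, Equiv.Perm.card_support_eq_two.2 hh.2.1⟩
  · intro h1 hh1 h2 hh2 heq
    rw [Finset.mem_filter] at hh1 hh2
    exact swap_support_inj hh1.2.1 hh2.2.1 heq
  · intro t ht
    obtain ⟨hsub, hcard⟩ := Finset.mem_powersetCard.1 ht
    obtain ⟨x, y, hxy, rfl⟩ := Finset.card_eq_two.1 hcard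
    refine ⟨Equiv.swap x y, ?_, (Equiv.Perm.support_swap hxy)⟩
    rw [Finset.mem_filter]
    exact ⟨Finset.mem_univ _, ⟨x, y, hxy, rfl⟩, by rw [Equiv.Perm.support_swap hxy]; exact hsub⟩

lemma card_swaps_total :
    (Finset.univ.filter fun h : Equiv.Perm (Fin n) => h.IsSwap).card = n.choose 2 := by
  have := card_swaps_support_subset (Finset.univ : Finset (Fin n))
  simp only [Finset.subset_univ, and_true, Finset.card_univ, Fintype.card_fin] at this
  exact this

lemma card_swaps_mem (i : Fin n) :
    (Finset.univ.filter fun h : Equiv.Perm (Fin n) => h.IsSwap ∧ i ∈ h.support).card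
      = n - 1 := by
  have : (Finset.univ.erase i).card = n - 1 := by
    rw [Finset.card_erase_of_mem (Finset.mem_univ i), Finset.card_univ, Fintype.card_fin]
  rw [← this]
  apply Finset.card_bij (fun h _ => h i)
  · intro h hh
    rw [Finset.mem_filter] at hh
    exact Finset.mem_erase.2 ⟨Equiv.Perm.mem_support.1 hh.2.2, Finset.mem_univ _⟩
  · intro h1 hh1 h2 hh2 heq
    rw [Finset.mem_filter] at hh1 hh2
    rw [swap_of_mem_support hh1.2.1 hh1.2.2, swap_of_mem_support hh2.2.1 hh2.2.2, heq]
  · intro j hj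
    have hij : i ≠ j := fun h => (Finset.mem_erase.1 hj).1 h.symm
    refine ⟨Equiv.swap i j, ?_, Equiv.swap_apply_left i j⟩
    rw [Finset.mem_filter]
    refine ⟨Finset.mem_univ _, ⟨i, j, hij, rfl⟩, ?_⟩
    rw [Equiv.Perm.support_swap hij]; simp

lemma comm_count_id :
    (Finset.univ.filter fun h : Equiv.Perm (Fin n) =>
      h.IsSwap ∧ h * 1 = 1 * h).card = n.choose 2 := by
  simp only [mul_one, one_mul, and_true]
  exact card_swaps_total

lemma comm_count_three {t u v : Fin n} (htu : t ≠ u) (htv : t ≠ v) (huv : u ≠ v) :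
    (Finset.univ.filter fun h : Equiv.Perm (Fin n) =>
      h.IsSwap ∧ h * (Equiv.swap t u * Equiv.swap t v) = (Equiv.swap t u * Equiv.swap t v) * h).card
      = (n - 3).choose 2 := by
  set g := Equiv.swap t u * Equiv.swap t v with hgdef
  have gt : g t = v := by
    simp only [hgdef, Equiv.Perm.mul_apply, Equiv.swap_apply_left]
    exact Equiv.swap_apply_of_ne_of_ne (Ne.symm htv) (Ne.symm huv)
  have gu : g u = t := by
    simp only [hgdef, Equiv.Perm.mul_apply]
    rw [Equiv.swap_apply_of_ne_of_ne (Ne.symm htu) huv, Equiv.swap_apply_right]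
  have gv : g v = u := by
    simp only [hgdef, Equiv.Perm.mul_apply, Equiv.swap_apply_right, Equiv.swap_apply_left]
  have gw : ∀ x, x ≠ t → x ≠ u → x ≠ v → g x = x := by
    intro x h1 h2 h3
    simp only [hgdef, Equiv.Perm.mul_apply]
    rw [Equiv.swap_apply_of_ne_of_ne h1 h3, Equiv.swap_apply_of_ne_of_ne h1 h2]
  have fix_iff : ∀ x, g x = x ↔ (x ≠ t ∧ x ≠ u ∧ x ≠ v) := by
    intro x
    constructor
    · intro hx
      refine ⟨?_, ?_, ?_⟩ <;> rintro rfl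
      · rw [gt] at hx; exact htv hx.symm
      · rw [gu] at hx; exact htu hx
      · rw [gv] at hx; exact huv hx
    · rintro ⟨h1, h2, h3⟩; exact gw x h1 h2 h3
  have no_two : ∀ x y, x ≠ y → g x = y → g y ≠ x := by
    intro x y hxy h1
    by_cases hx : x = t
    · subst hx; rw [gt] at h1; subst h1; rw [gv]; exact fun h => htu h.symm
    by_cases hxu : x = u
    · subst hxu; rw [gu] at h1; subst h1; rw [gt]; exact fun h => huv h.symm
    by_cases hxv : x = v
    · subst hxv; rw [gv] at h1; subst h1; rw [gu]; exact htv
    · rw [gw x hx hxu hxv] at h1; exact absurd h1 hxy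
  have hcard3 : ((Finset.univ : Finset (Fin n)) \ {t, u, v}).card = n - 3 := by
    rw [Finset.card_sdiff_of_subset (Finset.subset_univ _), Finset.card_univ, Fintype.card_fin]
    congr 1
    rw [Finset.card_insert_of_notMem (by simp [htu, htv]),
      Finset.card_insert_of_notMem (by simp [huv]), Finset.card_singleton]
  rw [show (Finset.univ.filter fun h : Equiv.Perm (Fin n) => h.IsSwap ∧ h * g = g * h)
      = Finset.univ.filter (fun h : Equiv.Perm (Fin n) =>
        h.IsSwap ∧ h.support ⊆ Finset.univ \ {t, u, v}) from ?_,
    card_swaps_support_subset, hcard3]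
  refine Finset.filter_congr ?_
  intro h _
  constructor
  · rintro ⟨hs, hc⟩
    refine ⟨hs, ?_⟩
    obtain ⟨x, y, hxy, rfl⟩ := id hs
    rw [swap_comm_iff hxy] at hc
    rcases hc with ⟨h1, h2⟩ | ⟨h1, h2⟩
    · rw [Equiv.Perm.support_swap hxy, Finset.insert_subset_iff, Finset.singleton_subset_iff]
      rw [fix_iff] at h1 h2
      constructor <;> simp only [Finset.mem_sdiff, Finset.mem_univ, true_and,
        Finset.mem_insert, Finset.mem_singleton] <;> tauto
    · exact absurd h2 (no_two x y hxy h1)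
  · rintro ⟨hs, hsub⟩
    refine ⟨hs, ?_⟩
    obtain ⟨x, y, hxy, rfl⟩ := id hs
    rw [swap_comm_iff hxy]
    left
    rw [Equiv.Perm.support_swap hxy, Finset.insert_subset_iff,
      Finset.singleton_subset_iff] at hsub
    obtain ⟨hx, hy⟩ := hsub
    simp only [Finset.mem_sdiff, Finset.mem_univ, true_and, Finset.mem_insert,
      Finset.mem_singleton] at hx hy
    exact ⟨(fix_iff x).2 (by tauto), (fix_iff y).2 (by tauto)⟩

lemma comm_count_four {p q r s : Fin n} (hpq : p ≠ q) (hpr : p ≠ r) (hps : p ≠ s)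
    (hqr : q ≠ r) (hqs : q ≠ s) (hrs : r ≠ s) :
    (Finset.univ.filter fun h : Equiv.Perm (Fin n) =>
      h.IsSwap ∧ h * (Equiv.swap p q * Equiv.swap r s) = (Equiv.swap p q * Equiv.swap r s) * h).card
      = (n - 4).choose 2 + 2 := by
  set g := Equiv.swap p q * Equiv.swap r s with hgdef
  have gp : g p = q := by
    simp only [hgdef, Equiv.Perm.mul_apply]
    rw [Equiv.swap_apply_of_ne_of_ne hpr hps, Equiv.swap_apply_left]
  have gq : g q = p := by
    simp only [hgdef, Equiv.Perm.mul_apply]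
    rw [Equiv.swap_apply_of_ne_of_ne hqr hqs, Equiv.swap_apply_right]
  have gr : g r = s := by
    simp only [hgdef, Equiv.Perm.mul_apply, Equiv.swap_apply_left]
    exact Equiv.swap_apply_of_ne_of_ne (Ne.symm hps) (Ne.symm hqs)
  have gs : g s = r := by
    simp only [hgdef, Equiv.Perm.mul_apply, Equiv.swap_apply_right]
    exact Equiv.swap_apply_of_ne_of_ne (Ne.symm hpr) (Ne.symm hqr)
  have gw : ∀ x, x ≠ p → x ≠ q → x ≠ r → x ≠ s → g x = x := by
    intro x h1 h2 h3 h4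
    simp only [hgdef, Equiv.Perm.mul_apply]
    rw [Equiv.swap_apply_of_ne_of_ne h3 h4, Equiv.swap_apply_of_ne_of_ne h1 h2]
  have fix_iff : ∀ x, g x = x ↔ (x ≠ p ∧ x ≠ q ∧ x ≠ r ∧ x ≠ s) := by
    intro x
    constructor
    · intro hx
      refine ⟨?_, ?_, ?_, ?_⟩ <;> rintro rfl
      · rw [gp] at hx; exact hpq hx.symm
      · rw [gq] at hx; exact hpq hx
      · rw [gr] at hx; exact hrs hx.symm
      · rw [gs] at hx; exact hrs hx
    · rintro ⟨h1, h2, h3, h4⟩; exact gw x h1 h2 h3 h4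
  have hcard4 : ((Finset.univ : Finset (Fin n)) \ {p, q, r, s}).card = n - 4 := by
    rw [Finset.card_sdiff_of_subset (Finset.subset_univ _), Finset.card_univ, Fintype.card_fin]
    congr 1
    rw [Finset.card_insert_of_notMem (by simp [hpq, hpr, hps]),
      Finset.card_insert_of_notMem (by simp [hqr, hqs]),
      Finset.card_insert_of_notMem (by simp [hrs]), Finset.card_singleton]
  have hseteq : (Finset.univ.filter fun h : Equiv.Perm (Fin n) => h.IsSwap ∧ h * g = g * h)
      = (Finset.univ.filter (fun h : Equiv.Perm (Fin n) =>
          h.IsSwap ∧ h.support ⊆ Finset.univ \ {p, q, r, s}))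
        ∪ {Equiv.swap p q, Equiv.swap r s} := by
    ext h
    simp only [Finset.mem_union, Finset.mem_filter, Finset.mem_univ, true_and,
      Finset.mem_insert, Finset.mem_singleton]
    constructor
    · rintro ⟨hs', hc⟩
      obtain ⟨x, y, hxy, rfl⟩ := id hs'
      rw [swap_comm_iff hxy] at hc
      rcases hc with ⟨h1, h2⟩ | ⟨h1, h2⟩
      · left
        refine ⟨hs', ?_⟩
        rw [Equiv.Perm.support_swap hxy, Finset.insert_subset_iff, Finset.singleton_subset_iff]
        rw [fix_iff] at h1 h2
        constructor <;> simp only [Finset.mem_sdiff, Finset.mem_univ, true_and,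
          Finset.mem_insert, Finset.mem_singleton] <;> tauto
      · right
        by_cases hx : x = p
        · subst hx; rw [gp] at h1; subst h1; left; rfl
        by_cases hxq : x = q
        · subst hxq; rw [gq] at h1; subst h1; left; exact Equiv.swap_comm _ _
        by_cases hxr : x = r
        · subst hxr; rw [gr] at h1; subst h1; right; rfl
        by_cases hxs : x = s
        · subst hxs; rw [gs] at h1; subst h1; right; exact Equiv.swap_comm _ _
        · rw [gw x hx hxq hxr hxs] at h1; exact absurd h1 hxy
    · rintro (⟨hs', hsub⟩ | rfl | rfl)
      · refine ⟨hs', ?_⟩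
        obtain ⟨x, y, hxy, rfl⟩ := id hs'
        rw [swap_comm_iff hxy]
        left
        rw [Equiv.Perm.support_swap hxy, Finset.insert_subset_iff,
          Finset.singleton_subset_iff] at hsub
        obtain ⟨hx, hy⟩ := hsub
        simp only [Finset.mem_sdiff, Finset.mem_univ, true_and, Finset.mem_insert,
          Finset.mem_singleton] at hx hy
        exact ⟨(fix_iff x).2 (by tauto), (fix_iff y).2 (by tauto)⟩
      · refine ⟨⟨p, q, hpq, rfl⟩, ?_⟩
        rw [swap_comm_iff hpq]
        exact Or.inr ⟨gp, gq⟩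
      · refine ⟨⟨r, s, hrs, rfl⟩, ?_⟩
        rw [swap_comm_iff hrs]
        exact Or.inr ⟨gr, gs⟩
  have hdisj : Disjoint (Finset.univ.filter (fun h : Equiv.Perm (Fin n) =>
      h.IsSwap ∧ h.support ⊆ Finset.univ \ {p, q, r, s}))
      ({Equiv.swap p q, Equiv.swap r s} : Finset (Equiv.Perm (Fin n))) := by
    rw [Finset.disjoint_left]
    intro h hh hmem
    rw [Finset.mem_filter] at hh
    rw [Finset.mem_insert, Finset.mem_singleton] at hmem
    rcases hmem with rfl | rfl
    · have h2 : p ∈ ((Finset.univ : Finset (Fin n)) \ {p, q, r, s}) :=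
        hh.2.2 (by rw [Equiv.Perm.support_swap hpq]; simp)
      simp at h2
    · have h2 : r ∈ ((Finset.univ : Finset (Fin n)) \ {p, q, r, s}) :=
        hh.2.2 (by rw [Equiv.Perm.support_swap hrs]; simp)
      simp at h2
  have hne : Equiv.swap p q ≠ Equiv.swap r s := by
    intro hcontra
    have : p ∈ (Equiv.swap r s).support := by
      rw [← hcontra, Equiv.Perm.support_swap hpq]; simp
    rw [Equiv.Perm.support_swap hrs] at this
    simp only [Finset.mem_insert, Finset.mem_singleton] at this
    tauto
  rw [hseteq, Finset.card_union_of_disjoint hdisj, card_swaps_support_subset, hcard4]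
  congr 1
  rw [Finset.card_insert_of_notMem (by simpa using hne), Finset.card_singleton]

lemma isSwap_mul_self {a : Equiv.Perm (Fin n)} (ha : a.IsSwap) : a * a = 1 := by
  obtain ⟨x, y, hxy, rfl⟩ := ha; exact Equiv.swap_mul_self x y

lemma isSwap_conj {g h : Equiv.Perm (Fin n)} (hs : h.IsSwap) : (g * h * g⁻¹).IsSwap := by
  obtain ⟨x, y, hxy, rfl⟩ := hs
  exact ⟨g x, g y, fun hc => hxy (g.injective hc), (Equiv.swap_apply_apply g x y).symm⟩

lemma comm_count_classify {a b : Equiv.Perm (Fin n)} (ha : a.IsSwap) (hb : b.IsSwap) :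
    (Finset.univ.filter fun h : Equiv.Perm (Fin n) =>
      h.IsSwap ∧ h * (a * b) = (a * b) * h).card
      = if a = b then n.choose 2
        else if Disjoint a.support b.support then (n - 4).choose 2 + 2
        else (n - 3).choose 2 := by
  split_ifs with heq hdisj
  · subst heq
    rw [isSwap_mul_self ha]
    exact comm_count_id
  · obtain ⟨p, q, hpq, rfl⟩ := id ha
    obtain ⟨r, s, hrs, rfl⟩ := id hb
    rw [Equiv.Perm.support_swap hpq, Equiv.Perm.support_swap hrs] at hdisj
    have hp := Finset.disjoint_left.1 hdisj (by simp : p ∈ ({p, q} : Finset (Fin n)))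
    have hq := Finset.disjoint_left.1 hdisj (by simp : q ∈ ({p, q} : Finset (Fin n)))
    simp only [Finset.mem_insert, Finset.mem_singleton, not_or] at hp hq
    exact comm_count_four hpq hp.1 hp.2 hq.1 hq.2 hrs
  · obtain ⟨t, hta, htb⟩ := Finset.not_disjoint_iff.1 hdisj
    have hA : a = Equiv.swap t (a t) := swap_of_mem_support ha hta
    have hB : b = Equiv.swap t (b t) := swap_of_mem_support hb htb
    have h1 : t ≠ a t := Ne.symm (Equiv.Perm.mem_support.1 hta)
    have h2 : t ≠ b t := Ne.symm (Equiv.Perm.mem_support.1 htb)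
    have h3 : a t ≠ b t := fun hc => heq (by rw [hA, hB, hc])
    rw [show a * b = Equiv.swap t (a t) * Equiv.swap t (b t) from by rw [← hA, ← hB]]
    exact comm_count_three h1 h2 h3

lemma comm_count_gram {a b : Equiv.Perm (Fin n)} (ha : a.IsSwap) (hb : b.IsSwap) :
    (Finset.univ.filter fun h : Equiv.Perm (Fin n) =>
      h.IsSwap ∧ h * (a * b) = (a * b) * h).card
      = (Finset.univ.filter fun h : Equiv.Perm (Fin n) =>
          h.IsSwap ∧ a * h * a = b * h * b).card := by
  have ha2 : a * a = 1 := isSwap_mul_self ha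
  have hb2 : b * b = 1 := isSwap_mul_self hb
  have hainv : a⁻¹ = a := inv_eq_of_mul_eq_one_left ha2
  have hcl : ∀ g : Equiv.Perm (Fin n), a * (a * g) = g := fun g => by
    rw [← mul_assoc, ha2, one_mul]
  have hbl : ∀ g : Equiv.Perm (Fin n), b * (b * g) = g := fun g => by
    rw [← mul_assoc, hb2, one_mul]
  have hswapconj : ∀ h : Equiv.Perm (Fin n), h.IsSwap → (a * h * a).IsSwap := by
    intro h hs
    have := isSwap_conj (g := a) hs
    rwa [hainv] at this
  have hinvol : ∀ h : Equiv.Perm (Fin n), a * (a * h * a) * a = h := by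
    intro h
    calc a * (a * h * a) * a = a * (a * (h * (a * a))) := by group
      _ = a * (a * (h * 1)) := by rw [ha2]
      _ = h := by rw [mul_one]; exact hcl h
  apply Finset.card_nbij' (fun h => a * h * a) (fun h => a * h * a)
  · intro h hh
    simp only [Finset.mem_coe, Finset.mem_filter] at hh ⊢
    obtain ⟨-, hs, hc⟩ := hh
    refine ⟨Finset.mem_univ _, hswapconj h hs, ?_⟩
    have eL : a * (a * h * a) * a = h := hinvol h
    have eR : b * (a * h * a) * b = h := by
      calc b * (a * h * a) * b = (b * a) * (h * (a * b)) := by group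
        _ = (b * a) * ((a * b) * h) := by rw [hc]
        _ = b * (a * (a * (b * h))) := by group
        _ = b * (b * h) := by rw [hcl (b * h)]
        _ = h := hbl h
    rw [eL, eR]
  · intro h hh
    simp only [Finset.mem_coe, Finset.mem_filter] at hh ⊢
    obtain ⟨-, hs, hc⟩ := hh
    refine ⟨Finset.mem_univ _, hswapconj h hs, ?_⟩
    calc (a * h * a) * (a * b) = a * (h * ((a * a) * b)) := by group
      _ = a * (h * b) := by rw [ha2, one_mul]
      _ = a * (b * (b * (h * b))) := by rw [hbl (h * b)]
      _ = a * (b * ((b * h * b))) := by group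
      _ = a * (b * (a * h * a)) := by rw [← hc]
      _ = (a * b) * (a * h * a) := by group
  · intro h _; exact hinvol h
  · intro h _; exact hinvol h

lemma card_subtype_filter (Pr : Equiv.Perm (Fin n) → Prop) [DecidablePred Pr] :
    (Finset.univ.filter fun b : {σ : Equiv.Perm (Fin n) // σ.IsSwap} =>
      Pr (b : Equiv.Perm (Fin n))).card
      = (Finset.univ.filter fun h : Equiv.Perm (Fin n) => h.IsSwap ∧ Pr h).card := by
  apply Finset.card_bij (fun (b : {σ : Equiv.Perm (Fin n) // σ.IsSwap}) _ => (b : Equiv.Perm (Fin n)))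
  · intro b hb
    rw [Finset.mem_filter] at hb ⊢
    exact ⟨Finset.mem_univ _, b.2, hb.2⟩
  · intro b1 h1 b2 h2 heq
    exact Subtype.ext heq
  · intro h hh
    rw [Finset.mem_filter] at hh
    exact ⟨⟨h, hh.2.1⟩, by rw [Finset.mem_filter]; exact ⟨Finset.mem_univ _, hh.2.2⟩, rfl⟩

lemma sum_swaps_mem (p : Fin n) (v : Fin n → ℝ) :
    ∑ b ∈ Finset.univ.filter (fun b : {σ : Equiv.Perm (Fin n) // σ.IsSwap} =>
        p ∈ (b : Equiv.Perm (Fin n)).support),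
      (∑ i ∈ (b : Equiv.Perm (Fin n)).support, v i)
      = ∑ x ∈ Finset.univ.erase p, (v p + v x) := by
  refine Finset.sum_bij'
    (i := fun (b : {σ : Equiv.Perm (Fin n) // σ.IsSwap})
      (_ : b ∈ Finset.univ.filter (fun b : {σ : Equiv.Perm (Fin n) // σ.IsSwap} =>
        p ∈ (b : Equiv.Perm (Fin n)).support)) => (b : Equiv.Perm (Fin n)) p)
    (j := fun (x : Fin n) (hx : x ∈ Finset.univ.erase p) => (⟨Equiv.swap p x,
      p, x, fun h => (Finset.mem_erase.1 hx).1 h.symm, rfl⟩ : {σ : Equiv.Perm (Fin n) // σ.IsSwap}))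
    ?hi ?hj ?left ?right ?hval
  case hi =>
    intro b hb
    simp only [Finset.mem_filter] at hb
    exact Finset.mem_erase.2 ⟨Equiv.Perm.mem_support.1 hb.2, Finset.mem_univ _⟩
  case hj =>
    intro x hx
    have hpx : p ≠ x := fun h => (Finset.mem_erase.1 hx).1 h.symm
    simp only [Finset.mem_filter]
    refine ⟨Finset.mem_univ _, ?_⟩
    rw [Equiv.Perm.support_swap hpx]; simp
  case left =>
    intro b hb
    simp only [Finset.mem_filter] at hb
    exact Subtype.ext (swap_of_mem_support b.2 hb.2).symm
  case right =>
    intro x hx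
    exact Equiv.swap_apply_left p x
  case hval =>
    intro b hb
    simp only [Finset.mem_filter] at hb
    have hne : p ≠ (b : Equiv.Perm (Fin n)) p :=
      Ne.symm (Equiv.Perm.mem_support.1 hb.2)
    have hsupp : (b : Equiv.Perm (Fin n)).support = {p, (b : Equiv.Perm (Fin n)) p} := by
      conv_lhs => rw [swap_of_mem_support b.2 hb.2]
      exact Equiv.Perm.support_swap hne
    rw [hsupp, Finset.sum_pair hne]

lemma sq_sum_expand {ι κ : Type*} [Fintype ι] [Fintype κ] [DecidableEq κ] (f : ι → κ)
    (x : ι → ℝ) :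
    ∑ a : ι, ∑ b : ι, (if f a = f b then x a * x b else 0)
      = ∑ k : κ, (∑ a : ι, if f a = k then x a else 0) ^ 2 := by
  have key : ∀ a b : ι, (if f a = f b then x a * x b else 0)
      = ∑ k : κ, (if f a = k then x a else 0) * (if f b = k then x b else 0) := by
    intro a b
    rw [Finset.sum_eq_single (f a)]
    · by_cases h : f a = f b
      · rw [if_pos h, if_pos rfl, if_pos h.symm]
      · rw [if_neg h, if_pos rfl, if_neg (fun hc : f b = f a => h hc.symm), mul_zero]
    · intro k _ hk
      rw [if_neg (fun hc : f a = k => hk hc.symm), zero_mul]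
    · intro hc
      exact absurd (Finset.mem_univ _) hc
  calc ∑ a : ι, ∑ b : ι, (if f a = f b then x a * x b else 0)
      = ∑ a : ι, ∑ b : ι, ∑ k : κ,
          (if f a = k then x a else 0) * (if f b = k then x b else 0) := by simp_rw [key]
    _ = ∑ a : ι, ∑ k : κ, ∑ b : ι,
          (if f a = k then x a else 0) * (if f b = k then x b else 0) := by
        exact Finset.sum_congr rfl fun a _ => Finset.sum_comm
    _ = ∑ k : κ, ∑ a : ι, ∑ b : ι,
          (if f a = k then x a else 0) * (if f b = k then x b else 0) := by
        exact Finset.sum_comm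
    _ = ∑ k : κ, (∑ a : ι, if f a = k then x a else 0) ^ 2 := by
        refine Finset.sum_congr rfl fun k _ => ?_
        rw [sq, Finset.sum_mul_sum]

lemma conj_unique {p q z : Fin n} (hpq : p ≠ q) (hpz : p ≠ z) (hqz : q ≠ z)
    {a : Equiv.Perm (Fin n)} (ha : a.IsSwap)
    (h : a * Equiv.swap p z * a = Equiv.swap q z) : a = Equiv.swap p q := by
  have hainv : a⁻¹ = a := inv_eq_of_mul_eq_one_left (isSwap_mul_self ha)
  have h' : Equiv.swap (a p) (a z) = Equiv.swap q z := by
    rw [Equiv.swap_apply_apply, hainv, h]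
  have hne : a p ≠ a z := fun hc => hpz (a.injective hc)
  have hsupp : ({a p, a z} : Finset (Fin n)) = {q, z} := by
    rw [← Equiv.Perm.support_swap hne, ← Equiv.Perm.support_swap hqz, h']
  rcases pair_eq_pair hne hsupp with ⟨h1, h2⟩ | ⟨h1, h2⟩
  · have hp : p ∈ a.support := Equiv.Perm.mem_support.2 (by rw [h1]; exact Ne.symm hpq)
    rw [swap_of_mem_support ha hp, h1]
  · have hp : p ∈ a.support := Equiv.Perm.mem_support.2 (by rw [h1]; exact Ne.symm hpz)
    have := swap_of_mem_support ha hp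
    rw [h1] at this
    rw [this, Equiv.swap_apply_right] at h2
    exact absurd h2 hpq
/-- For the 2-cycles class `C` of `S_n` (`n > 2`) the Killing form matrix
`K(a,b) = |Z(ab) ∩ C|` is positive definite; the all-ones vector `θ` (trivial
component) is an eigenvector with eigenvalue `(n⁴-10n³+41n²-72n+48)/4`; the
standard component (vectors `σ ↦ Σ_{i ∈ supp σ} v i` with `Σ v = 0`) has
eigenvalue `n²-6n+12`; and for `n > 3` the `S^{(n-2,2)}` component (functions
with vanishing row sums) has eigenvalue `2n`. -/
theorem stmt_17 (n : ℕ) (hn : 2 < n)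
    (M : Matrix {σ : Equiv.Perm (Fin n) // σ.IsSwap} {σ : Equiv.Perm (Fin n) // σ.IsSwap} ℝ)
    (hM : M = Matrix.of fun a b : {σ : Equiv.Perm (Fin n) // σ.IsSwap} => ((Finset.univ.filter fun h : Equiv.Perm (Fin n) =>
      h.IsSwap ∧ h * ((a : Equiv.Perm (Fin n)) * b) = ((a : Equiv.Perm (Fin n)) * b) * h).card : ℝ)) :
    M.PosDef ∧
    (M.mulVec (fun _ => 1) = fun _ =>
      (((n : ℝ) ^ 4 - 10 * n ^ 3 + 41 * n ^ 2 - 72 * n + 48) / 4)) ∧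
    (∀ v : Fin n → ℝ, ∑ i, v i = 0 →
      M.mulVec (fun σ => ∑ i ∈ (σ : Equiv.Perm (Fin n)).support, v i)
        = ((n : ℝ) ^ 2 - 6 * n + 12) • fun σ : {σ : Equiv.Perm (Fin n) // σ.IsSwap} =>
            ∑ i ∈ (σ : Equiv.Perm (Fin n)).support, v i) ∧
    (3 < n → ∀ w : {σ : Equiv.Perm (Fin n) // σ.IsSwap} → ℝ,
      (∀ i : Fin n, ∑ σ : {σ : Equiv.Perm (Fin n) // σ.IsSwap},
        (if i ∈ (σ : Equiv.Perm (Fin n)).support then w σ else 0) = 0) →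
      M.mulVec w = (2 * (n : ℝ)) • w) := by
  have hn3 : 3 ≤ n := hn
  set X : ℝ := ((n.choose 2 : ℕ) : ℝ) with hX
  set Y : ℝ := (((n - 3).choose 2 : ℕ) : ℝ) with hY
  set Z : ℝ := ((((n - 4).choose 2 : ℕ) : ℝ) + 2) with hZ
  -- entry formula
  have Mval : ∀ a b : {σ : Equiv.Perm (Fin n) // σ.IsSwap},
      M a b = if (a : Equiv.Perm (Fin n)) = b then X
        else if _root_.Disjoint (a : Equiv.Perm (Fin n)).support (b : Equiv.Perm (Fin n)).support
          then Z else Y := by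
    intro a b
    rw [hM]
    show ((Finset.univ.filter fun h : Equiv.Perm (Fin n) =>
      h.IsSwap ∧ h * ((a : Equiv.Perm (Fin n)) * b) = ((a : Equiv.Perm (Fin n)) * b) * h).card : ℝ) = _
    rw [comm_count_classify a.2 b.2]
    split_ifs with h1 h2
    · rw [hX]
    · rw [hZ]; push_cast; ring
    · rw [hY]
  -- master row computation
  have master : ∀ (a : {σ : Equiv.Perm (Fin n) // σ.IsSwap}) (p q : Fin n), p ≠ q →
      (a : Equiv.Perm (Fin n)) = Equiv.swap p q →
      ∀ f : {σ : Equiv.Perm (Fin n) // σ.IsSwap} → ℝ,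
      ∑ b : {σ : Equiv.Perm (Fin n) // σ.IsSwap}, M a b * f b
        = Y * (∑ b, f b) + (X - Y) * f a
          + (Z - Y) * ((∑ b, f b)
            - (∑ b ∈ Finset.univ.filter (fun b : {σ : Equiv.Perm (Fin n) // σ.IsSwap} =>
                p ∈ (b : Equiv.Perm (Fin n)).support), f b)
            - (∑ b ∈ Finset.univ.filter (fun b : {σ : Equiv.Perm (Fin n) // σ.IsSwap} =>
                q ∈ (b : Equiv.Perm (Fin n)).support), f b)
            + f a) := by
    intro a p q hpq ha f
    have hpa : p ∈ (a : Equiv.Perm (Fin n)).support := by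
      rw [ha, Equiv.Perm.support_swap hpq]; simp
    have point : ∀ b : {σ : Equiv.Perm (Fin n) // σ.IsSwap},
        M a b * f b = Y * f b + (if b = a then (X - Y) * f b else 0)
          + (if _root_.Disjoint (a : Equiv.Perm (Fin n)).support (b : Equiv.Perm (Fin n)).support
              then (Z - Y) * f b else 0) := by
      intro b
      rw [Mval a b]
      by_cases h1 : (a : Equiv.Perm (Fin n)) = (b : Equiv.Perm (Fin n))
      · have hb : b = a := Subtype.ext h1.symm
        rw [if_pos h1, if_pos hb, if_neg (fun hd => (Finset.disjoint_left.1 hd hpa) (h1 ▸ hpa)),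
          hb]
        ring
      · rw [if_neg h1, if_neg (fun hb : b = a => h1 (by rw [hb]))]
        split_ifs with h2 <;> ring
    rw [Finset.sum_congr rfl fun b _ => point b]
    rw [Finset.sum_add_distrib, Finset.sum_add_distrib, ← Finset.mul_sum]
    have e1 : ∑ b : {σ : Equiv.Perm (Fin n) // σ.IsSwap},
        (if b = a then (X - Y) * f b else 0) = (X - Y) * f a := by
      rw [Finset.sum_ite_eq' Finset.univ a (fun b => (X - Y) * f b), if_pos (Finset.mem_univ a)]
    have e2 : ∑ b : {σ : Equiv.Perm (Fin n) // σ.IsSwap},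
        (if _root_.Disjoint (a : Equiv.Perm (Fin n)).support (b : Equiv.Perm (Fin n)).support
          then (Z - Y) * f b else 0)
        = (Z - Y) * ∑ b ∈ Finset.univ.filter
            (fun b : {σ : Equiv.Perm (Fin n) // σ.IsSwap} =>
              _root_.Disjoint (a : Equiv.Perm (Fin n)).support (b : Equiv.Perm (Fin n)).support), f b := by
      rw [← Finset.sum_filter, Finset.mul_sum]
    rw [e1, e2]
    have hsplit : ∑ b ∈ Finset.univ.filter
          (fun b : {σ : Equiv.Perm (Fin n) // σ.IsSwap} =>
            _root_.Disjoint (a : Equiv.Perm (Fin n)).support (b : Equiv.Perm (Fin n)).support), f b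
        = (∑ b, f b)
          - (∑ b ∈ Finset.univ.filter (fun b : {σ : Equiv.Perm (Fin n) // σ.IsSwap} =>
              p ∈ (b : Equiv.Perm (Fin n)).support), f b)
          - (∑ b ∈ Finset.univ.filter (fun b : {σ : Equiv.Perm (Fin n) // σ.IsSwap} =>
              q ∈ (b : Equiv.Perm (Fin n)).support), f b)
          + f a := by
      have h1 := Finset.sum_filter_add_sum_filter_not Finset.univ
        (fun b : {σ : Equiv.Perm (Fin n) // σ.IsSwap} =>
          _root_.Disjoint (a : Equiv.Perm (Fin n)).support (b : Equiv.Perm (Fin n)).support) f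
      have h2 : Finset.univ.filter (fun b : {σ : Equiv.Perm (Fin n) // σ.IsSwap} =>
          ¬ _root_.Disjoint (a : Equiv.Perm (Fin n)).support (b : Equiv.Perm (Fin n)).support)
          = Finset.univ.filter (fun b : {σ : Equiv.Perm (Fin n) // σ.IsSwap} =>
            p ∈ (b : Equiv.Perm (Fin n)).support ∨ q ∈ (b : Equiv.Perm (Fin n)).support) := by
        refine Finset.filter_congr fun b _ => ?_
        rw [ha, Equiv.Perm.support_swap hpq, Finset.disjoint_insert_left,
          Finset.disjoint_singleton_left]
        constructor
        · intro h; by_contra hc; push_neg at hc; exact h ⟨hc.1, hc.2⟩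
        · rintro (h | h) ⟨h1', h2'⟩ <;> tauto
      have hone : Finset.univ.filter (fun b : {σ : Equiv.Perm (Fin n) // σ.IsSwap} =>
          p ∈ (b : Equiv.Perm (Fin n)).support ∧ q ∈ (b : Equiv.Perm (Fin n)).support) = {a} := by
        ext b
        simp only [Finset.mem_filter, Finset.mem_univ, true_and, Finset.mem_singleton]
        constructor
        · rintro ⟨hp', hq'⟩
          have hsub : ({p, q} : Finset (Fin n)) ⊆ (b : Equiv.Perm (Fin n)).support := by
            intro z hz
            rcases Finset.mem_insert.1 hz with rfl | hz
            · exact hp'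
            · rw [Finset.mem_singleton] at hz; subst hz; exact hq'
          have hcard : (b : Equiv.Perm (Fin n)).support.card ≤ ({p, q} : Finset (Fin n)).card := by
            rw [Equiv.Perm.card_support_eq_two.2 b.2,
              Finset.card_insert_of_notMem (by simp [hpq]), Finset.card_singleton]
          have hseq := Finset.eq_of_subset_of_card_le hsub hcard
          exact Subtype.ext (swap_support_inj b.2 a.2
            (by rw [← hseq, ha, Equiv.Perm.support_swap hpq]))
        · rintro rfl
          rw [ha, Equiv.Perm.support_swap hpq]
          simp
      have h3 : ∑ b ∈ Finset.univ.filter (fun b : {σ : Equiv.Perm (Fin n) // σ.IsSwap} =>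
            p ∈ (b : Equiv.Perm (Fin n)).support ∨ q ∈ (b : Equiv.Perm (Fin n)).support), f b
          = (∑ b ∈ Finset.univ.filter (fun b : {σ : Equiv.Perm (Fin n) // σ.IsSwap} =>
              p ∈ (b : Equiv.Perm (Fin n)).support), f b)
            + (∑ b ∈ Finset.univ.filter (fun b : {σ : Equiv.Perm (Fin n) // σ.IsSwap} =>
              q ∈ (b : Equiv.Perm (Fin n)).support), f b) - f a := by
        have h4 := Finset.sum_union_inter (s₁ := Finset.univ.filter
            (fun b : {σ : Equiv.Perm (Fin n) // σ.IsSwap} => p ∈ (b : Equiv.Perm (Fin n)).support))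
          (s₂ := Finset.univ.filter
            (fun b : {σ : Equiv.Perm (Fin n) // σ.IsSwap} => q ∈ (b : Equiv.Perm (Fin n)).support))
          (f := f)
        rw [← Finset.filter_or, ← Finset.filter_and, hone, Finset.sum_singleton] at h4
        linarith
      rw [h2, h3] at h1
      linarith
    rw [hsplit]
  -- auxiliary counting facts
  have hcount_mem : ∀ p : Fin n,
      (Finset.univ.filter (fun b : {σ : Equiv.Perm (Fin n) // σ.IsSwap} =>
        p ∈ (b : Equiv.Perm (Fin n)).support)).card = n - 1 := by
    intro p
    rw [card_subtype_filter (fun h : Equiv.Perm (Fin n) => p ∈ h.support)]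
    exact card_swaps_mem p
  have hcard_univ : (Finset.univ : Finset {σ : Equiv.Perm (Fin n) // σ.IsSwap}).card
      = n.choose 2 := by
    have h := card_subtype_filter (n := n) (fun _ : Equiv.Perm (Fin n) => True)
    simp only [Finset.filter_true, and_true] at h
    rw [h, card_swaps_total]
  have hXv : X = (n : ℝ) * ((n : ℝ) - 1) / 2 := by rw [hX, Nat.cast_choose_two]
  have hK : ((n - 1 : ℕ) : ℝ) = (n : ℝ) - 1 := by
    rw [Nat.cast_sub (by omega), Nat.cast_one]
  have hYv : Y = ((n : ℝ) - 3) * ((n : ℝ) - 4) / 2 := by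
    rw [hY, Nat.cast_choose_two, Nat.cast_sub hn3]
    push_cast
    ring
  have hZv : 4 ≤ n → Z = ((n : ℝ) - 4) * ((n : ℝ) - 5) / 2 + 2 := by
    intro h4
    rw [hZ, Nat.cast_choose_two, Nat.cast_sub h4]
    push_cast
    ring
  refine ⟨?_, ?_, ?_, ?_⟩
  · -- Positive definiteness
    have hgram : ∀ a b : {σ : Equiv.Perm (Fin n) // σ.IsSwap},
        M a b = ((Finset.univ.filter fun h : Equiv.Perm (Fin n) =>
          h.IsSwap ∧ (a : Equiv.Perm (Fin n)) * h * a
            = (b : Equiv.Perm (Fin n)) * h * b).card : ℝ) := by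
      intro a b
      rw [hM]
      show ((Finset.univ.filter fun h : Equiv.Perm (Fin n) =>
        h.IsSwap ∧ h * ((a : Equiv.Perm (Fin n)) * b)
          = ((a : Equiv.Perm (Fin n)) * b) * h).card : ℝ) = _
      rw [comm_count_gram a.2 b.2]
    refine Matrix.PosDef.of_dotProduct_mulVec_pos ?_ ?_
    · show M.conjTranspose = M
      ext a b
      rw [Matrix.conjTranspose_apply, star_trivial, hgram a b, hgram b a]
      congr 1
      apply congrArg
      refine Finset.filter_congr fun h _ => ?_
      exact ⟨fun ⟨h1, h2⟩ => ⟨h1, h2.symm⟩, fun ⟨h1, h2⟩ => ⟨h1, h2.symm⟩⟩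
    · intro x hx
      have hstar : star x = x := funext fun i => star_trivial _
      rw [hstar]
      have hQ : x ⬝ᵥ (M *ᵥ x) = ∑ h : Equiv.Perm (Fin n), ∑ k : Equiv.Perm (Fin n),
          (∑ a : {σ : Equiv.Perm (Fin n) // σ.IsSwap},
            if h.IsSwap ∧ (a : Equiv.Perm (Fin n)) * h * a = k then x a else 0) ^ 2 := by
        calc x ⬝ᵥ (M *ᵥ x)
            = ∑ a : {σ : Equiv.Perm (Fin n) // σ.IsSwap}, x a
                * ∑ b : {σ : Equiv.Perm (Fin n) // σ.IsSwap}, M a b * x b := rfl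
          _ = ∑ a : {σ : Equiv.Perm (Fin n) // σ.IsSwap},
                ∑ b : {σ : Equiv.Perm (Fin n) // σ.IsSwap}, x a * (M a b * x b) := by
              simp_rw [Finset.mul_sum]
          _ = ∑ a : {σ : Equiv.Perm (Fin n) // σ.IsSwap},
                ∑ b : {σ : Equiv.Perm (Fin n) // σ.IsSwap}, ∑ h : Equiv.Perm (Fin n),
                (if h.IsSwap ∧ (a : Equiv.Perm (Fin n)) * h * a
                    = (b : Equiv.Perm (Fin n)) * h * b then x a * x b else 0) := by
              refine Finset.sum_congr rfl fun a _ => Finset.sum_congr rfl fun b _ => ?_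
              rw [hgram a b, Finset.card_filter]
              push_cast
              rw [Finset.sum_mul, Finset.mul_sum]
              refine Finset.sum_congr rfl fun h _ => ?_
              split_ifs with hcond <;> ring
          _ = ∑ a : {σ : Equiv.Perm (Fin n) // σ.IsSwap}, ∑ h : Equiv.Perm (Fin n),
                ∑ b : {σ : Equiv.Perm (Fin n) // σ.IsSwap},
                (if h.IsSwap ∧ (a : Equiv.Perm (Fin n)) * h * a
                    = (b : Equiv.Perm (Fin n)) * h * b then x a * x b else 0) := by
              exact Finset.sum_congr rfl fun a _ => Finset.sum_comm
          _ = ∑ h : Equiv.Perm (Fin n), ∑ a : {σ : Equiv.Perm (Fin n) // σ.IsSwap},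
                ∑ b : {σ : Equiv.Perm (Fin n) // σ.IsSwap},
                (if h.IsSwap ∧ (a : Equiv.Perm (Fin n)) * h * a
                    = (b : Equiv.Perm (Fin n)) * h * b then x a * x b else 0) := by
              exact Finset.sum_comm
          _ = ∑ h : Equiv.Perm (Fin n), ∑ k : Equiv.Perm (Fin n),
                (∑ a : {σ : Equiv.Perm (Fin n) // σ.IsSwap},
                  if h.IsSwap ∧ (a : Equiv.Perm (Fin n)) * h * a = k then x a else 0) ^ 2 := by
              refine Finset.sum_congr rfl fun h _ => ?_
              by_cases hs : h.IsSwap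
              · have h1 : ∀ a b : {σ : Equiv.Perm (Fin n) // σ.IsSwap},
                    (if h.IsSwap ∧ (a : Equiv.Perm (Fin n)) * h * a
                        = (b : Equiv.Perm (Fin n)) * h * b then x a * x b else 0)
                      = (if (fun c : {σ : Equiv.Perm (Fin n) // σ.IsSwap} =>
                          (c : Equiv.Perm (Fin n)) * h * c) a
                          = (fun c : {σ : Equiv.Perm (Fin n) // σ.IsSwap} =>
                          (c : Equiv.Perm (Fin n)) * h * c) b then x a * x b else 0) := by
                  intro a b
                  simp only [hs, true_and]
                rw [Finset.sum_congr rfl fun a _ => Finset.sum_congr rfl fun b _ => h1 a b,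
                  sq_sum_expand (fun c : {σ : Equiv.Perm (Fin n) // σ.IsSwap} =>
                    (c : Equiv.Perm (Fin n)) * h * c) x]
                refine Finset.sum_congr rfl fun k _ => ?_
                congr 1
                refine Finset.sum_congr rfl fun a _ => ?_
                simp only [hs, true_and]
              · simp [hs]
      rw [hQ]
      obtain ⟨a₀, ha₀⟩ := Function.ne_iff.1 hx
      obtain ⟨p, q, hpq, hap⟩ := a₀.2
      obtain ⟨z, hzp, hzq⟩ : ∃ z : Fin n, z ≠ p ∧ z ≠ q := by
        have hne : (({p, q} : Finset (Fin n))ᶜ).Nonempty := by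
          rw [← Finset.card_pos, Finset.card_compl, Fintype.card_fin]
          have hle : ({p, q} : Finset (Fin n)).card ≤ 2 := by
            refine le_trans (Finset.card_insert_le _ _) ?_
            simp
          omega
        obtain ⟨z, hz⟩ := hne
        rw [Finset.mem_compl, Finset.mem_insert, Finset.mem_singleton] at hz
        push_neg at hz
        exact ⟨z, hz⟩
      have hpz : p ≠ z := Ne.symm hzp
      have hqz : q ≠ z := Ne.symm hzq
      have hkey : (∑ a : {σ : Equiv.Perm (Fin n) // σ.IsSwap},
          if (Equiv.swap p z).IsSwap ∧ (a : Equiv.Perm (Fin n)) * Equiv.swap p z * a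
            = Equiv.swap q z then x a else 0) = x a₀ := by
        rw [Finset.sum_eq_single a₀]
        · rw [if_pos]
          refine ⟨⟨p, z, hpz, rfl⟩, ?_⟩
          rw [hap]
          have hconj : Equiv.swap p q * Equiv.swap p z * (Equiv.swap p q)⁻¹
              = Equiv.swap q z := by
            rw [← Equiv.swap_apply_apply, Equiv.swap_apply_left,
              Equiv.swap_apply_of_ne_of_ne hzp hzq]
          rwa [Equiv.swap_inv] at hconj
        · intro b _ hb
          rw [if_neg]
          rintro ⟨-, hcond⟩
          exact hb (Subtype.ext (by rw [conj_unique hpq hpz hqz b.2 hcond, ← hap]))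
        · intro hmem
          exact absurd (Finset.mem_univ a₀) hmem
      apply Finset.sum_pos'
      · intro h _
        exact Finset.sum_nonneg fun k _ => sq_nonneg _
      · refine ⟨Equiv.swap p z, Finset.mem_univ _, ?_⟩
        apply Finset.sum_pos'
        · intro k _
          exact sq_nonneg _
        · refine ⟨Equiv.swap q z, Finset.mem_univ _, ?_⟩
          rw [hkey]
          exact sq_pos_iff.2 ha₀
  · -- trivial eigenvector
    funext a
    obtain ⟨p, q, hpq, ha⟩ := a.2
    have hm := master a p q hpq ha (fun _ => 1)
    simp only [mul_one] at hm
    have hS1 : ∑ _b : {σ : Equiv.Perm (Fin n) // σ.IsSwap}, (1 : ℝ) = X := by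
      rw [Finset.sum_const, hcard_univ, nsmul_eq_mul, mul_one, hX]
    have hSp : ∀ r : Fin n, ∑ _b ∈ Finset.univ.filter
        (fun b : {σ : Equiv.Perm (Fin n) // σ.IsSwap} =>
          r ∈ (b : Equiv.Perm (Fin n)).support), (1 : ℝ) = ((n - 1 : ℕ) : ℝ) := by
      intro r
      rw [Finset.sum_const, hcount_mem r, nsmul_eq_mul, mul_one]
    rw [hS1, hSp p, hSp q] at hm
    show ∑ b, M a b * 1 = _
    simp only [mul_one]
    rw [hm]
    by_cases h4 : 4 ≤ n
    · rw [hXv, hYv, hZv h4, hK]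
      ring
    · have h3 : n = 3 := by omega
      rw [hX, hY, hZ, h3]
      norm_num [show ((3 : ℕ).choose 2) = 3 from rfl, show ((3 - 3 : ℕ).choose 2) = 0 from rfl,
        show ((3 - 4 : ℕ).choose 2) = 0 from rfl, show (3 - 1 : ℕ) = 2 from rfl]
  · -- standard representation
    intro v hv
    funext a
    obtain ⟨p, q, hpq, ha⟩ := a.2
    have hm := master a p q hpq ha (fun σ => ∑ i ∈ (σ : Equiv.Perm (Fin n)).support, v i)
    try simp only at hm
    have hSall : ∑ b : {σ : Equiv.Perm (Fin n) // σ.IsSwap},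
        (∑ i ∈ (b : Equiv.Perm (Fin n)).support, v i) = 0 := by
      have e : ∀ b : {σ : Equiv.Perm (Fin n) // σ.IsSwap},
          ∑ i ∈ (b : Equiv.Perm (Fin n)).support, v i
            = ∑ i : Fin n, if i ∈ (b : Equiv.Perm (Fin n)).support then v i else 0 := by
        intro b
        rw [Finset.sum_ite_mem, Finset.univ_inter]
      rw [Finset.sum_congr rfl fun b _ => e b, Finset.sum_comm]
      have e2 : ∀ i : Fin n, ∑ b : {σ : Equiv.Perm (Fin n) // σ.IsSwap},
          (if i ∈ (b : Equiv.Perm (Fin n)).support then v i else 0) = ((n - 1 : ℕ) : ℝ) * v i := by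
        intro i
        rw [← Finset.sum_filter, Finset.sum_const, hcount_mem i, nsmul_eq_mul]
      rw [Finset.sum_congr rfl fun i _ => e2 i, ← Finset.mul_sum, hv, mul_zero]
    have hSp : ∀ r : Fin n, ∑ b ∈ Finset.univ.filter
        (fun b : {σ : Equiv.Perm (Fin n) // σ.IsSwap} =>
          r ∈ (b : Equiv.Perm (Fin n)).support),
        (∑ i ∈ (b : Equiv.Perm (Fin n)).support, v i)
        = ((n - 1 : ℕ) : ℝ) * v r + (0 - v r) := by
      intro r
      rw [sum_swaps_mem r v, Finset.sum_add_distrib, Finset.sum_const,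
        Finset.card_erase_of_mem (Finset.mem_univ r), Finset.card_univ, Fintype.card_fin,
        nsmul_eq_mul, Finset.sum_erase_eq_sub (Finset.mem_univ r), hv]
    have hfa : ∑ i ∈ (a : Equiv.Perm (Fin n)).support, v i = v p + v q := by
      rw [ha, Equiv.Perm.support_swap hpq, Finset.sum_pair hpq]
    rw [hSall, hSp p, hSp q, hfa] at hm
    show ∑ b, M a b * _ = _
    rw [hm]
    rw [Pi.smul_apply, smul_eq_mul, hfa]
    by_cases h4 : 4 ≤ n
    · rw [hXv, hYv, hZv h4, hK]
      ring
    · have h3 : n = 3 := by omega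
      rw [hX, hY, hZ, h3]
      norm_num [show ((3 : ℕ).choose 2) = 3 from rfl, show ((3 - 3 : ℕ).choose 2) = 0 from rfl,
        show ((3 - 4 : ℕ).choose 2) = 0 from rfl, show (3 - 1 : ℕ) = 2 from rfl]
      ring
  · -- S^{(n-2,2)} component
    intro h4' w hw
    have h4 : 4 ≤ n := h4'
    funext a
    obtain ⟨p, q, hpq, ha⟩ := a.2
    have hm := master a p q hpq ha w
    have hSp : ∀ r : Fin n, ∑ b ∈ Finset.univ.filter
        (fun b : {σ : Equiv.Perm (Fin n) // σ.IsSwap} =>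
          r ∈ (b : Equiv.Perm (Fin n)).support), w b = 0 := by
      intro r
      have := hw r
      rwa [← Finset.sum_filter] at this
    have hSall : ∑ b : {σ : Equiv.Perm (Fin n) // σ.IsSwap}, w b = 0 := by
      have h2S : (2 : ℝ) * ∑ b : {σ : Equiv.Perm (Fin n) // σ.IsSwap}, w b = 0 := by
        have e0 : ∑ i : Fin n, (∑ σ : {σ : Equiv.Perm (Fin n) // σ.IsSwap},
            if i ∈ (σ : Equiv.Perm (Fin n)).support then w σ else 0) = 0 := by
          rw [Finset.sum_congr rfl fun i _ => hw i, Finset.sum_const, smul_zero]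
        rw [Finset.sum_comm] at e0
        have e1 : ∀ σ : {σ : Equiv.Perm (Fin n) // σ.IsSwap},
            ∑ i : Fin n, (if i ∈ (σ : Equiv.Perm (Fin n)).support then w σ else 0)
              = 2 * w σ := by
          intro σ
          rw [Finset.sum_ite_mem, Finset.univ_inter, Finset.sum_const,
            Equiv.Perm.card_support_eq_two.2 σ.2, nsmul_eq_mul]
          norm_num
        rw [Finset.sum_congr rfl fun σ _ => e1 σ, ← Finset.mul_sum] at e0
        exact e0
      have := mul_eq_zero.1 h2S
      rcases this with h | h
      · norm_num at h
      · exact h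
    rw [hSall, hSp p, hSp q] at hm
    show ∑ b, M a b * w b = _
    rw [hm, Pi.smul_apply, smul_eq_mul]
    rw [hXv, hYv, hZv h4]
    ring
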